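/- arXiv:1807.00415 — 3 statements merged into one kernel-verified Lean document; each statement's English description precedes it below -/
import Mathlib

section
/- For all λ, λ', μ, μ' ∈ V one has the factorization identity S(λ, λ'; μ, μ') · S(0, 0; μ, μ') = S(λ, 0; μ, μ') · S(0, λ'; μ, μ'). (Equivalently, whenever the denominators are nonzero, the normalized S-matrix ratio satisfies S^χ_{(λ,λ'),(μ,μ')} / S^χ_{(0,0),(μ,μ')} = (S^χ_{(λ,0),(μ,μ')} / S^χ_{(0,0),(μ,μ')}) · (S^χ_{(0,λ'),(μ,μ')} / S^χ_{(0,0),(μ,μ')}); this is the key computation in the proof of Theorem 6.1 yielding the fusion rule L_k(λ, 0) ⊠ L_k(0, λ') ≅ L_k(λ, λ') for the rational principal W-algebra.) -/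
open scoped BigOperators

/-- The Weyl character sum `χ_μ(c; λ) = ∑_{w ∈ W} ε(w) exp(-2πi c ⟪λ+ρ, w(μ+ρ)⟫)`. -/
noncomputable def chi {V : Type*} [NormedAddCommGroup V] [InnerProductSpace ℝ V]
    (W : Subgroup (V ≃ₗᵢ[ℝ] V)) [Fintype W] (ε : W →* ℤˣ) (ρ : V)
    (c : ℝ) (μ lam : V) : ℂ :=
  ∑ w : W, ((ε w : ℤ) : ℂ) *
    Complex.exp ((-2) * (Real.pi : ℂ) * Complex.I * (c : ℂ) *
      ((inner ℝ (lam + ρ) ((w : V ≃ₗᵢ[ℝ] V) (μ + ρ)) : ℝ) : ℂ))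

/-- The (unnormalized Kac–Wakimoto) W-algebra `S`-matrix entry
`S(λ, λ'; μ, μ') = exp(2πi(⟪λ+ρ, μ'+ρ⟫ + ⟪λ'+ρ, μ+ρ⟫)) · χ_μ(c; λ) · χ_{μ'}(c'; λ')`. -/
noncomputable def Smat {V : Type*} [NormedAddCommGroup V] [InnerProductSpace ℝ V]
    (W : Subgroup (V ≃ₗᵢ[ℝ] V)) [Fintype W] (ε : W →* ℤˣ) (ρ : V)
    (c c' : ℝ) (lam lam' μ μ' : V) : ℂ :=
  Complex.exp (2 * (Real.pi : ℂ) * Complex.I *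
      (((inner ℝ (lam + ρ) (μ' + ρ) : ℝ) : ℂ) + ((inner ℝ (lam' + ρ) (μ + ρ) : ℝ) : ℂ))) *
    chi W ε ρ c μ lam * chi W ε ρ c' μ' lam'

/-- Factorization identity for the Kac–Wakimoto W-algebra `S`-matrix:
`S(λ, λ'; μ, μ') · S(0, 0; μ, μ') = S(λ, 0; μ, μ') · S(0, λ'; μ, μ')`. -/
theorem Smat_factorization {V : Type*} [NormedAddCommGroup V] [InnerProductSpace ℝ V]
    [FiniteDimensional ℝ V]
    (W : Subgroup (V ≃ₗᵢ[ℝ] V)) [Fintype W] (ε : W →* ℤˣ) (ρ : V) (c c' : ℝ) :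
    ∀ lam lam' μ μ' : V,
      Smat W ε ρ c c' lam lam' μ μ' * Smat W ε ρ c c' 0 0 μ μ'
        = Smat W ε ρ c c' lam 0 μ μ' * Smat W ε ρ c c' 0 lam' μ μ' := by
  intro lam lam' μ μ'
  unfold Smat
  have h : Complex.exp (2 * (Real.pi : ℂ) * Complex.I *
        (((inner ℝ (lam + ρ) (μ' + ρ) : ℝ) : ℂ) + ((inner ℝ (lam' + ρ) (μ + ρ) : ℝ) : ℂ))) *
      Complex.exp (2 * (Real.pi : ℂ) * Complex.I *
        (((inner ℝ ((0 : V) + ρ) (μ' + ρ) : ℝ) : ℂ) + ((inner ℝ ((0 : V) + ρ) (μ + ρ) : ℝ) : ℂ)))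
      = Complex.exp (2 * (Real.pi : ℂ) * Complex.I *
        (((inner ℝ (lam + ρ) (μ' + ρ) : ℝ) : ℂ) + ((inner ℝ ((0 : V) + ρ) (μ + ρ) : ℝ) : ℂ))) *
      Complex.exp (2 * (Real.pi : ℂ) * Complex.I *
        (((inner ℝ ((0 : V) + ρ) (μ' + ρ) : ℝ) : ℂ) + ((inner ℝ (lam' + ρ) (μ + ρ) : ℝ) : ℂ))) := by
    rw [← Complex.exp_add, ← Complex.exp_add]
    congr 1
    ring
  linear_combination (chi W ε ρ c μ lam * chi W ε ρ c' μ' lam' * chi W ε ρ c μ 0 *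
    chi W ε ρ c' μ' 0) * h
end

section
/- Let λ, μ ∈ V and c ∈ ℝ, and assume that for every w ∈ W both ⟪λ + ρ, w(μ + ρ) - (μ + ρ)⟫ ∈ ℤ and ⟪ρ, w(μ + ρ) - (μ + ρ)⟫ ∈ ℤ. Then exp(2πi⟪λ, ρ⟫) · χ_μ(c + 1; λ) · χ_μ(c; 0) = exp(-2πi⟪λ, μ⟫) · χ_μ(c; λ) · χ_μ(c + 1; 0). In particular, if χ_μ(c; 0) ≠ 0 and χ_μ(c + 1; 0) ≠ 0, then exp(2πi⟪λ, ρ⟫) · χ_μ(c + 1; λ)/χ_μ(c + 1; 0) = exp(-2πi⟪λ, μ⟫) · χ_μ(c; λ)/χ_μ(c; 0). (With c = v/u this is the computation in the proof of Theorem 8.1 identifying the normalized Hopf links of the W-algebra at shifted level with e^{-2πi(μ,λ)} times the normalized character S-matrix ratio χ_μ(e(-v/u); λ)/χ_μ(e(-v/u); 0) of the admissible affine vertex algebra.) -/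
open scoped BigOperators

lemma chi_succ {V : Type*} [NormedAddCommGroup V] [InnerProductSpace ℝ V]
    (W : Subgroup (V ≃ₗᵢ[ℝ] V)) [Fintype W] (ε : W →* ℤˣ) (ρ : V)
    (lam μ : V) (c : ℝ)
    (h : ∀ w : W, ∃ n : ℤ,
      (inner ℝ (lam + ρ) ((w : V ≃ₗᵢ[ℝ] V) (μ + ρ) - (μ + ρ)) : ℝ) = n) :
    chi W ε ρ (c + 1) μ lam
      = Complex.exp ((-2) * (Real.pi : ℂ) * Complex.I *
          ((inner ℝ (lam + ρ) (μ + ρ) : ℝ) : ℂ)) * chi W ε ρ c μ lam := by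
  unfold chi
  rw [Finset.mul_sum]
  apply Finset.sum_congr rfl
  intro w _
  obtain ⟨n, hn⟩ := h w
  have hinner : (inner ℝ (lam + ρ) ((w : V ≃ₗᵢ[ℝ] V) (μ + ρ)) : ℝ)
      = (inner ℝ (lam + ρ) (μ + ρ) : ℝ) + n := by
    rw [← hn, inner_sub_right]; ring
  rw [hinner]
  set a : ℂ := ((inner ℝ (lam + ρ) (μ + ρ) : ℝ) : ℂ)
  have h1 : ((-2) * (Real.pi : ℂ) * Complex.I * ((c : ℂ) + 1) * (a + (n : ℂ)))
      = ((-2) * (Real.pi : ℂ) * Complex.I * a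
          + (-2) * (Real.pi : ℂ) * Complex.I * (c : ℂ) * (a + (n : ℂ)))
        + ((-n : ℤ) : ℂ) * (2 * (Real.pi : ℂ) * Complex.I) := by
    push_cast; ring
  push_cast
  rw [h1, Complex.exp_add, Complex.exp_int_mul_two_pi_mul_I, mul_one, Complex.exp_add]
  ring

/-- If `⟪λ+ρ, w(μ+ρ)-(μ+ρ)⟫ ∈ ℤ` and `⟪ρ, w(μ+ρ)-(μ+ρ)⟫ ∈ ℤ` for every `w ∈ W`, then
`e^{2πi⟪λ,ρ⟫} χ_μ(c+1; λ) χ_μ(c; 0) = e^{-2πi⟪λ,μ⟫} χ_μ(c; λ) χ_μ(c+1; 0)`; in particular,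
when the denominators are nonzero,
`e^{2πi⟪λ,ρ⟫} χ_μ(c+1; λ)/χ_μ(c+1; 0) = e^{-2πi⟪λ,μ⟫} χ_μ(c; λ)/χ_μ(c; 0)`. -/
theorem chi_shift_ratio {V : Type*} [NormedAddCommGroup V] [InnerProductSpace ℝ V]
    [FiniteDimensional ℝ V]
    (W : Subgroup (V ≃ₗᵢ[ℝ] V)) [Fintype W] (ε : W →* ℤˣ) (ρ : V)
    (lam μ : V) (c : ℝ)
    (hint₁ : ∀ w : W, ∃ n : ℤ,
      (inner ℝ (lam + ρ) ((w : V ≃ₗᵢ[ℝ] V) (μ + ρ) - (μ + ρ)) : ℝ) = n)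
    (hint₂ : ∀ w : W, ∃ n : ℤ,
      (inner ℝ ρ ((w : V ≃ₗᵢ[ℝ] V) (μ + ρ) - (μ + ρ)) : ℝ) = n) :
    Complex.exp (2 * (Real.pi : ℂ) * Complex.I * ((inner ℝ lam ρ : ℝ) : ℂ)) *
          chi W ε ρ (c + 1) μ lam * chi W ε ρ c μ 0
        = Complex.exp ((-2) * (Real.pi : ℂ) * Complex.I * ((inner ℝ lam μ : ℝ) : ℂ)) *
            chi W ε ρ c μ lam * chi W ε ρ (c + 1) μ 0
      ∧ (chi W ε ρ c μ 0 ≠ 0 → chi W ε ρ (c + 1) μ 0 ≠ 0 →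
          Complex.exp (2 * (Real.pi : ℂ) * Complex.I * ((inner ℝ lam ρ : ℝ) : ℂ)) *
              (chi W ε ρ (c + 1) μ lam / chi W ε ρ (c + 1) μ 0)
            = Complex.exp ((-2) * (Real.pi : ℂ) * Complex.I * ((inner ℝ lam μ : ℝ) : ℂ)) *
                (chi W ε ρ c μ lam / chi W ε ρ c μ 0)) := by
  have h0 : ∀ w : W, ∃ n : ℤ,
      (inner ℝ ((0 : V) + ρ) ((w : V ≃ₗᵢ[ℝ] V) (μ + ρ) - (μ + ρ)) : ℝ) = n := by
    intro w; simpa using hint₂ w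
  have s1 := chi_succ W ε ρ lam μ c hint₁
  have s2 := chi_succ W ε ρ 0 μ c h0
  have key : Complex.exp (2 * (Real.pi : ℂ) * Complex.I * ((inner ℝ lam ρ : ℝ) : ℂ)) *
        Complex.exp ((-2) * (Real.pi : ℂ) * Complex.I *
          ((inner ℝ (lam + ρ) (μ + ρ) : ℝ) : ℂ))
      = Complex.exp ((-2) * (Real.pi : ℂ) * Complex.I * ((inner ℝ lam μ : ℝ) : ℂ)) *
        Complex.exp ((-2) * (Real.pi : ℂ) * Complex.I *
          ((inner ℝ ((0 : V) + ρ) (μ + ρ) : ℝ) : ℂ)) := by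
    rw [← Complex.exp_add, ← Complex.exp_add]
    congr 1
    have e1 : (inner ℝ (lam + ρ) (μ + ρ) : ℝ)
        = (inner ℝ lam μ : ℝ) + inner ℝ lam ρ + inner ℝ ρ μ + inner ℝ ρ ρ := by
      simp [inner_add_left, inner_add_right]; ring
    have e2 : (inner ℝ ((0 : V) + ρ) (μ + ρ) : ℝ)
        = (inner ℝ ρ μ : ℝ) + inner ℝ ρ ρ := by
      simp [inner_add_right]
    rw [e1, e2]; push_cast; ring
  have main : Complex.exp (2 * (Real.pi : ℂ) * Complex.I * ((inner ℝ lam ρ : ℝ) : ℂ)) *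
          chi W ε ρ (c + 1) μ lam * chi W ε ρ c μ 0
        = Complex.exp ((-2) * (Real.pi : ℂ) * Complex.I * ((inner ℝ lam μ : ℝ) : ℂ)) *
            chi W ε ρ c μ lam * chi W ε ρ (c + 1) μ 0 := by
    rw [s1, s2]
    linear_combination (chi W ε ρ c μ lam * chi W ε ρ c μ 0) * key
  refine ⟨main, fun h1 h2 => ?_⟩
  field_simp
  ring_nf
  ring_nf at main
  linear_combination main
end

section
/- Let N, u, v be positive integers with gcd(v, N·u) = 1. Let λ, ν, μ ∈ V, let φ_1, …, φ_n ∈ V, and let N_1, …, N_n be integers. Assume: (a) N · ⟪α + ρ, w(μ + ρ)⟫ ∈ ℤ for every w ∈ W and every α ∈ {0, λ, ν, φ_1, …, φ_n}; (b) χ_μ(1/u; 0) ≠ 0; and (c) χ_μ(1/u; λ) · χ_μ(1/u; ν) = ∑_{i=1}^n N_i · χ_μ(1/u; φ_i) · χ_μ(1/u; 0). Then χ_μ(v/u; 0) ≠ 0 and χ_μ(v/u; λ) · χ_μ(v/u; ν) = ∑_{i=1}^n N_i · χ_μ(v/u; φ_i) · χ_μ(v/u; 0). (This Galois transport of the integer-level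 Verlinde relation from the coefficient 1/u to the coefficient v/u is the core of the proof of the second fusion rule of Theorem 6.1 and of Corollary 8.2.) -/
open scoped BigOperators

/-- Auxiliary: if `ψ` sends the abstract root to `ζ^k` where `ζ = exp(-2πi/(Nu))`,
then `ψ` sends the abstract character sum to `χ(k/u; α)`. -/
theorem chi_aux {V : Type*} [NormedAddCommGroup V] [InnerProductSpace ℝ V]
    (W : Subgroup (V ≃ₗᵢ[ℝ] V)) [Fintype W] (ε : W →* ℤˣ) (ρ : V)
    (N u : ℕ) (hN : 0 < N) (hu : 0 < u)
    [Fact (Irreducible (Polynomial.cyclotomic (N * u) ℚ))]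
    (μ α : V) (m : W → ℤ)
    (hm : ∀ w : W, (N : ℝ) * (inner ℝ (α + ρ) ((w : V ≃ₗᵢ[ℝ] V) (μ + ρ)) : ℝ) = m w)
    (ψ : AdjoinRoot (Polynomial.cyclotomic (N * u) ℚ) →+* ℂ) (k : ℕ)
    (hψr : ψ (AdjoinRoot.root _) =
      Complex.exp (-(2 * (Real.pi : ℂ) * Complex.I) / (N * u : ℕ)) ^ k) :
    ψ (∑ w : W, ((ε w : ℤ) : AdjoinRoot (Polynomial.cyclotomic (N * u) ℚ)) *
        (AdjoinRoot.root _) ^ (m w))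
      = chi W ε ρ ((k : ℝ) / (u : ℝ)) μ α := by
  rw [map_sum]
  unfold chi
  refine Finset.sum_congr rfl fun w _ => ?_
  rw [map_mul, map_intCast, map_zpow₀, hψr]
  congr 1
  rw [← zpow_natCast (Complex.exp (-(2 * (Real.pi : ℂ) * Complex.I) / (N * u : ℕ))) k,
    ← zpow_mul, ← Complex.exp_int_mul]
  congr 1
  have hmw : ((m w : ℂ)) = (N : ℂ) *
      ((inner ℝ (α + ρ) ((w : V ≃ₗᵢ[ℝ] V) (μ + ρ)) : ℝ) : ℂ) := by
    exact_mod_cast congrArg (Complex.ofReal) (hm w).symm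
  have hNC : (N : ℂ) ≠ 0 := Nat.cast_ne_zero.mpr hN.ne'
  have huC : (u : ℂ) ≠ 0 := Nat.cast_ne_zero.mpr hu.ne'
  push_cast [hmw]
  field_simp

/-- Galois transport of the integer-level Verlinde relation from coefficient `1/u` to
coefficient `v/u`: if `gcd(v, Nu) = 1`, the relevant pairings are `1/N`-integral,
`χ_μ(1/u; 0) ≠ 0` and
`χ_μ(1/u; λ) χ_μ(1/u; ν) = ∑ᵢ Nᵢ χ_μ(1/u; φᵢ) χ_μ(1/u; 0)`, then
`χ_μ(v/u; 0) ≠ 0` and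
`χ_μ(v/u; λ) χ_μ(v/u; ν) = ∑ᵢ Nᵢ χ_μ(v/u; φᵢ) χ_μ(v/u; 0)`. -/
theorem chi_verlinde_galois_transport {V : Type*} [NormedAddCommGroup V]
    [InnerProductSpace ℝ V] [FiniteDimensional ℝ V]
    (W : Subgroup (V ≃ₗᵢ[ℝ] V)) [Fintype W] (ε : W →* ℤˣ) (ρ : V)
    (N u v : ℕ) (hN : 0 < N) (hu : 0 < u) (hv : 0 < v)
    (hcop : Nat.gcd v (N * u) = 1)
    (lam ν μ : V) (n : ℕ) (φ : Fin n → V) (Nc : Fin n → ℤ)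
    (hint : ∀ w : W, ∀ α ∈ insert (0 : V) (insert lam (insert ν (Set.range φ))),
      ∃ m : ℤ, (N : ℝ) * (inner ℝ (α + ρ) ((w : V ≃ₗᵢ[ℝ] V) (μ + ρ)) : ℝ) = m)
    (hne : chi W ε ρ (1 / (u : ℝ)) μ 0 ≠ 0)
    (hrel : chi W ε ρ (1 / (u : ℝ)) μ lam * chi W ε ρ (1 / (u : ℝ)) μ ν
      = ∑ i : Fin n, (Nc i : ℂ) * chi W ε ρ (1 / (u : ℝ)) μ (φ i)
          * chi W ε ρ (1 / (u : ℝ)) μ 0) :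
    chi W ε ρ ((v : ℝ) / (u : ℝ)) μ 0 ≠ 0
      ∧ chi W ε ρ ((v : ℝ) / (u : ℝ)) μ lam * chi W ε ρ ((v : ℝ) / (u : ℝ)) μ ν
        = ∑ i : Fin n, (Nc i : ℂ) * chi W ε ρ ((v : ℝ) / (u : ℝ)) μ (φ i)
            * chi W ε ρ ((v : ℝ) / (u : ℝ)) μ 0 := by
  classical
  have hM0 : 0 < N * u := Nat.mul_pos hN hu
  haveI : NeZero (N * u) := ⟨hM0.ne'⟩
  set ζ : ℂ := Complex.exp (-(2 * (Real.pi : ℂ) * Complex.I) / (N * u : ℕ)) with hζdef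
  have hζ : IsPrimitiveRoot ζ (N * u) := by
    have h1 : ζ = (Complex.exp (2 * (Real.pi : ℂ) * Complex.I / (N * u : ℕ)))⁻¹ := by
      rw [← Complex.exp_neg, hζdef, neg_div]
    rw [h1]
    exact (Complex.isPrimitiveRoot_exp (N * u) hM0.ne').inv
  have hζv : IsPrimitiveRoot (ζ ^ v) (N * u) := hζ.pow_of_coprime v hcop
  have key : ∀ z : ℂ, IsPrimitiveRoot z (N * u) →
      Polynomial.eval₂ (algebraMap ℚ ℂ) z (Polynomial.cyclotomic (N * u) ℚ) = 0 := by
    intro z hz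
    rw [Polynomial.eval₂_eq_eval_map, Polynomial.map_cyclotomic]
    exact (Polynomial.isRoot_cyclotomic_iff).mpr hz
  haveI : Fact (Irreducible (Polynomial.cyclotomic (N * u) ℚ)) :=
    ⟨Polynomial.cyclotomic.irreducible_rat hM0⟩
  set f : AdjoinRoot (Polynomial.cyclotomic (N * u) ℚ) →+* ℂ :=
    AdjoinRoot.lift (algebraMap ℚ ℂ) ζ (key ζ hζ) with hfdef
  set g : AdjoinRoot (Polynomial.cyclotomic (N * u) ℚ) →+* ℂ :=
    AdjoinRoot.lift (algebraMap ℚ ℂ) (ζ ^ v) (key _ hζv) with hgdef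
  have hfr : f (AdjoinRoot.root _) = ζ ^ (1 : ℕ) := by
    rw [pow_one]; exact AdjoinRoot.lift_root _
  have hgr : g (AdjoinRoot.root _) = ζ ^ v := AdjoinRoot.lift_root _
  have main : ∀ (α : V),
      (∀ w : W, ∃ m : ℤ,
        (N : ℝ) * (inner ℝ (α + ρ) ((w : V ≃ₗᵢ[ℝ] V) (μ + ρ)) : ℝ) = m) →
      ∃ x : AdjoinRoot (Polynomial.cyclotomic (N * u) ℚ),
        f x = chi W ε ρ (1 / (u : ℝ)) μ α ∧
        g x = chi W ε ρ ((v : ℝ) / (u : ℝ)) μ α := by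
    intro α hα
    choose m hm using hα
    refine ⟨∑ w : W, ((ε w : ℤ) : AdjoinRoot (Polynomial.cyclotomic (N * u) ℚ)) *
      (AdjoinRoot.root _) ^ (m w), ?_, ?_⟩
    · have := chi_aux W ε ρ N u hN hu μ α m hm f 1 hfr
      simpa using this
    · exact chi_aux W ε ρ N u hN hu μ α m hm g v hgr
  obtain ⟨x0, hx0f, hx0g⟩ := main 0 (fun w => hint w 0 (Set.mem_insert _ _))
  obtain ⟨xl, hxlf, hxlg⟩ := main lam
    (fun w => hint w lam (Set.mem_insert_of_mem _ (Set.mem_insert _ _)))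
  obtain ⟨xn, hxnf, hxng⟩ := main ν
    (fun w => hint w ν
      (Set.mem_insert_of_mem _ (Set.mem_insert_of_mem _ (Set.mem_insert _ _))))
  choose xφ hxφf hxφg using fun i => main (φ i)
    (fun w => hint w (φ i)
      (Set.mem_insert_of_mem _ (Set.mem_insert_of_mem _
        (Set.mem_insert_of_mem _ (Set.mem_range_self i)))))
  have h0 : x0 ≠ 0 := fun h => hne (by rw [← hx0f, h, map_zero])
  have hrelK : xl * xn = ∑ i : Fin n, (Nc i :
      AdjoinRoot (Polynomial.cyclotomic (N * u) ℚ)) * xφ i * x0 := by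
    apply f.injective
    rw [map_mul, map_sum, hxlf, hxnf, hrel]
    refine Finset.sum_congr rfl fun i _ => ?_
    rw [map_mul, map_mul, map_intCast, hx0f, hxφf]
  constructor
  · intro h
    exact h0 (g.injective (by rw [hx0g, h, map_zero]))
  · rw [← hxlg, ← hxng, ← map_mul, hrelK, map_sum]
    refine Finset.sum_congr rfl fun i _ => ?_
    rw [map_mul, map_mul, map_intCast, hx0g, hxφg]
end
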